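/- Let E be a directed graph with no heads, G⁰ ⊆ E⁰ containing all singular vertices, and T the complementary subgraph (T⁰ = E⁰ \ G⁰, T¹ = edges with both endpoints in T⁰) assumed acyclic. Prove: if v ∈ T⁰ and the set B_v (of paths ending at v, starting in G⁰, with all intermediate sources in T⁰) is infinite, then there exists an infinite path y ∈ T^∞ (all edges in T¹) with r(y) = v. -/

import Mathlib

/-- `β ∈ B_v`: a finite path of length at least `1` with range `v`, source in `G⁰`, and all
intermediate sources in `T⁰ = E⁰ \ G⁰`. -/
def InB {V E : Type*} (r s : E → V) (G0 : Set V) (v : V) (β : List E) : Prop :=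
  β ≠ [] ∧ β.Chain' (fun e f => s e = r f) ∧
  (∀ h : 0 < β.length, r (β.get ⟨0, h⟩) = v) ∧
  (∀ (i : ℕ) (h : i < β.length),
    (i = β.length - 1 → s (β.get ⟨i, h⟩) ∈ G0) ∧
    (i < β.length - 1 → s (β.get ⟨i, h⟩) ∉ G0))

/-- A cycle: a nonempty composable list of edges whose source equals its range and whose
edges have pairwise distinct sources. -/
def IsCycleList {V E : Type*} (r s : E → V) (α : List E) : Prop :=
  α ≠ [] ∧ α.Chain' (fun e f => s e = r f) ∧
  (∀ h : α ≠ [], s (α.getLast h) = r (α.head h)) ∧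
  (∀ i j : Fin α.length, i ≠ j → s (α.get i) ≠ s (α.get j))

/-- A head: an infinite path `x₁x₂…` which is acyclic, and such that every vertex
`r(xᵢ)` receives only the edge `xᵢ` and every `s(xᵢ)` emits only `xᵢ`. -/
def IsHead {V E : Type*} (r s : E → V) (x : ℕ → E) : Prop :=
  (∀ i : ℕ, s (x i) = r (x (i + 1))) ∧
  (¬ ∃ i j : ℕ, i ≤ j ∧ s (x j) = r (x i) ∧
    ∀ a b : ℕ, i ≤ a → a < b → b ≤ j → s (x a) ≠ s (x b)) ∧
  (∀ i : ℕ, ∀ e : E, r e = r (x i) → e = x i) ∧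
  (∀ i : ℕ, ∀ e : E, s e = s (x i) → e = x i)

private lemma InB_tail {V E : Type*} (r s : E → V) (G0 : Set V) (u : V) (e : E) (γ : List E)
    (hγ : γ ≠ []) (h : InB r s G0 u (e :: γ)) : InB r s G0 (s e) γ := by
  obtain ⟨-, hchain, -, hcond⟩ := h
  have hlen : 0 < γ.length := List.length_pos_iff.mpr hγ
  refine ⟨hγ, hchain.tail, ?_, ?_⟩
  · intro h0
    rcases γ with _ | ⟨a, γ'⟩
    · simp at hγ
    · simp only [List.Chain', List.isChain_cons_cons] at hchain
      simpa using hchain.1.symm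
  · intro i hi
    have hi' : i + 1 < (e :: γ).length := by simpa using Nat.succ_lt_succ hi
    have := hcond (i + 1) hi'
    have hget : (e :: γ).get ⟨i + 1, hi'⟩ = γ.get ⟨i, hi⟩ := rfl
    rw [hget] at this
    constructor
    · intro heq
      exact this.1 (by simp; omega)
    · intro hlt
      exact this.2 (by simp; omega)


/-- Let `E` be a countable directed graph with no heads, let `G⁰ ⊆ E⁰` contain all singular
vertices, and suppose the complementary subgraph `T` is acyclic.  If `v ∈ T⁰` and `B_v` is
infinite, then there is an infinite path `y` with all edges in `T¹` and `r(y) = v`. -/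
theorem stmt10 {V E : Type*} [Countable V] [Countable E] (r s : E → V) (G0 : Set V)
    (hsing : ∀ u : V, ({e : E | r e = u} = ∅ ∨ {e : E | r e = u}.Infinite) → u ∈ G0)
    (hnohead : ¬ ∃ x : ℕ → E, IsHead r s x)
    (hTacyclic : ¬ ∃ α : List E,
      (∀ e ∈ α, r e ∉ G0 ∧ s e ∉ G0) ∧ IsCycleList r s α)
    (v : V) (hv : v ∉ G0)
    (hBv : {β : List E | InB r s G0 v β}.Infinite) :
    ∃ y : ℕ → E, (∀ i : ℕ, s (y i) = r (y (i + 1))) ∧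
      (∀ i : ℕ, r (y i) ∉ G0 ∧ s (y i) ∉ G0) ∧
      r (y 0) = v := by
  classical
  set Bset : V → Set (List E) := fun u => {β | InB r s G0 u β} with hBsetdef
  have step : ∀ u : V, u ∉ G0 → (Bset u).Infinite →
      ∃ e : E, r e = u ∧ s e ∉ G0 ∧ (Bset (s e)).Infinite := by
    intro u hu hinf
    -- finitely many, but at least one, edges into u
    have hFfin : {e : E | r e = u}.Finite := by
      by_contra h
      exact hu (hsing u (Or.inr h))
    -- pigeonhole: some edge e into u heads infinitely many paths in Bset u
    have hpig : ∃ e : E, r e = u ∧ (Bset u ∩ {β | β.head? = some e}).Infinite := by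
      by_contra h
      push_neg at h
      have hsub : Bset u ⊆ ⋃ e ∈ {e : E | r e = u},
          (Bset u ∩ {β | β.head? = some e}) := by
        intro β hβ
        have hne : β ≠ [] := hβ.1
        have hfirst := hβ.2.2.1
        have hlen : 0 < β.length := List.length_pos_iff.mpr hne
        have hget : β.get ⟨0, hlen⟩ = β.head hne := by
          rcases β with _ | ⟨a, l⟩
          · exact absurd rfl hne
          · rfl
        refine Set.mem_biUnion (show β.head hne ∈ {e : E | r e = u} from ?_) ⟨hβ, ?_⟩
        · rw [← hget]; exact hfirst hlen
        · simp [List.head?_eq_head hne]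
      have hfin : (⋃ e ∈ {e : E | r e = u},
          (Bset u ∩ {β | β.head? = some e})).Finite := by
        refine Set.Finite.biUnion hFfin ?_
        intro e he
        by_cases hre : r e = u
        · exact Set.not_infinite.mp (fun hi => hi (h e hre))
        · exact absurd he hre
      exact hinf (hfin.subset hsub)
    obtain ⟨e, hre, hinf2⟩ := hpig
    -- remove the (at most one) path [e]
    have hinf3 : ((Bset u ∩ {β | β.head? = some e}) \ {[e]}).Infinite :=
      hinf2.diff (Set.finite_singleton _)
    -- every remaining path has form e :: γ, γ ≠ []
    have hform : ∀ β ∈ (Bset u ∩ {β | β.head? = some e}) \ {[e]},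
        β = e :: β.tail ∧ β.tail ≠ [] := by
      intro β hβ
      obtain ⟨⟨hβB, hβh⟩, hβne⟩ := hβ
      have hne : β ≠ [] := hβB.1
      have hcons : β = e :: β.tail := by
        rcases β with _ | ⟨a, l⟩
        · simp_all
        · simp only [Set.mem_setOf_eq, List.head?_cons, Option.some.injEq] at hβh
          simp [hβh]
      refine ⟨hcons, ?_⟩
      intro htail
      exact hβne (by rw [hcons, htail]; rfl)
    -- s e ∉ G0
    obtain ⟨β₀, hβ₀⟩ := hinf3.nonempty
    have hsE : s e ∉ G0 := by
      obtain ⟨hcons, htail⟩ := hform β₀ hβ₀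
      obtain ⟨⟨hβB, -⟩, -⟩ := hβ₀
      rw [hcons] at hβB
      have htl : 0 < β₀.tail.length := List.length_pos_iff.mpr htail
      have h0 : (0 : ℕ) < (e :: β₀.tail).length := by simp
      have := (hβB.2.2.2 0 h0).2 (by simpa using htl)
      simpa using this
    -- tails give infinitely many elements of Bset (s e)
    refine ⟨e, hre, hsE, ?_⟩
    have himg : (List.tail '' ((Bset u ∩ {β | β.head? = some e}) \ {[e]})).Infinite := by
      refine hinf3.image ?_
      intro β₁ h₁ β₂ h₂ htl
      rw [(hform β₁ h₁).1, (hform β₂ h₂).1, htl]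
    refine himg.mono ?_
    rintro γ ⟨β, hβ, rfl⟩
    obtain ⟨hcons, htail⟩ := hform β hβ
    obtain ⟨⟨hβB, -⟩, -⟩ := hβ
    exact InB_tail r s G0 u e β.tail htail (hcons ▸ hβB)
  -- iterate
  have key : ∀ p : {u : V // u ∉ G0 ∧ (Bset u).Infinite},
      ∃ e : E, r e = p.1 ∧ s e ∉ G0 ∧ (Bset (s e)).Infinite :=
    fun p => step p.1 p.2.1 p.2.2
  choose g hg1 hg2 hg3 using key
  let f : ℕ → {u : V // u ∉ G0 ∧ (Bset u).Infinite} := fun n =>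
    Nat.rec ⟨v, hv, hBv⟩ (fun _ p => ⟨s (g p), hg2 p, hg3 p⟩) n
  refine ⟨fun n => g (f n), ?_, ?_, ?_⟩
  · intro n
    exact (hg1 (f (n + 1))).symm
  · intro n
    exact ⟨(hg1 (f n)).symm ▸ (f n).2.1, hg2 (f n)⟩
  · exact hg1 (f 0)
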